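/- The map Π : G → Γ(G) given by Π(g) = ({1,g}, g) is an injective partial homomorphism, i.e., it satisfies Π(1)Π(g) = Π(g) = Π(g)Π(1), Π(g⁻¹)Π(g)Π(h) = Π(g⁻¹)Π(gh), and Π(g)Π(h)Π(h⁻¹) = Π(gh)Π(h⁻¹) for all g,h ∈ G. -/

import Mathlib

/-- The Birget–Rhodes expansion of a group `G`: pairs `(R, g)` where `R` is a
finite subset of `G` containing `1` and `g`. -/
def BR (G : Type*) [Group G] [DecidableEq G] : Type _ :=
  {p : Finset G × G // (1 : G) ∈ p.1 ∧ p.2 ∈ p.1}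

variable {G : Type*} [Group G] [DecidableEq G]

/-- Multiplication `(R,g)·(S,h) = (R ∪ gS, gh)`. -/
instance : Mul (BR G) :=
  ⟨fun x y =>
    ⟨(x.1.1 ∪ y.1.1.image (x.1.2 * ·), x.1.2 * y.1.2),
      Finset.mem_union_left _ x.2.1,
      Finset.mem_union_right _ (Finset.mem_image_of_mem _ y.2.2)⟩⟩

/-- The universal map `Π(g) = ({1,g}, g)`. -/
def BRpi (g : G) : BR G :=
  ⟨({1, g}, g), Finset.mem_insert_self _ _,
    Finset.mem_insert_of_mem (Finset.mem_singleton_self _)⟩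

lemma BR_mul_fst (x y : BR G) : (x * y).1.1 = x.1.1 ∪ y.1.1.image (x.1.2 * ·) := rfl

lemma BR_mul_snd (x y : BR G) : (x * y).1.2 = x.1.2 * y.1.2 := rfl

/-- `Π` is an injective partial homomorphism. -/
theorem BRpi_injective_partialHom :
    Function.Injective (BRpi (G := G)) ∧
      (∀ g : G, BRpi 1 * BRpi g = BRpi g ∧ BRpi g * BRpi 1 = BRpi g) ∧
      (∀ g h : G, BRpi g⁻¹ * BRpi g * BRpi h = BRpi g⁻¹ * BRpi (g * h)) ∧
      (∀ g h : G, BRpi g * BRpi h * BRpi h⁻¹ = BRpi (g * h) * BRpi h⁻¹) := by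
  refine ⟨fun a b hab => congrArg (fun x : BR G => x.1.2) hab,
    fun g => ⟨?_, ?_⟩, fun g h => ?_, fun g h => ?_⟩ <;>
  · apply Subtype.ext
    apply Prod.ext
    · ext x
      simp only [BR_mul_fst, BR_mul_snd]
      simp only [BRpi, BR_mul_fst, BR_mul_snd, Finset.image_insert,
        Finset.image_singleton, mul_one, one_mul, mul_inv_cancel, inv_mul_cancel,
        inv_mul_cancel_left, mul_inv_cancel_left, mul_inv_cancel_right, inv_mul_cancel_right, Finset.mem_union,
        Finset.mem_insert, Finset.mem_singleton]
      tauto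
    · simp only [BR_mul_snd]
      show _ * _ = _
      simp [BRpi, BR_mul_snd, mul_assoc]
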